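/- Let G be a Lie 2-group with multiplication functor m: G × G → G and let u ∈ T_{e₀}G₀. Define the vector field q(u)₁ on G₁ by q(u)₁(γ) = T𝓛_γ(T1(u)), where 𝓛_γ is left multiplication by γ in the Lie group G₁ and 1: G₀ → G₁ is the unit map. Then q(u)₁ preserves composition of arrows: q(u)₁(γ₂ ∗ γ₁) = q(u)₁(γ₂) ⋆ q(u)₁(γ₁) for all composable (γ₂, γ₁), where ⋆ = T∗ is the composition in the tangent groupoid TG. -/
import Mathlib


/-!
STATEMENT 10: Let `G` be a Lie 2-group and `u ∈ T_{e₀}G₀`.  The vector field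
`q(u)₁` on `G₁` defined by `q(u)₁(γ) = T𝓛_γ(T1(u))` preserves composition of arrows:
`q(u)₁(γ₂ ∗ γ₁) = q(u)₁(γ₂) ⋆ q(u)₁(γ₁)` for composable `(γ₂, γ₁)`, where `⋆ = T∗`
is the composition in the tangent groupoid `TG`.

We work in an algebraic model of the tangent 2-group: `TT` is the 2-group `TG`
(with group multiplications `Tm`, composition `⋆` and unit `T1 = TT.e`), `ζ` is the
zero section and `π` the projection.  A tangent vector `u ∈ T_{e₀}G₀` is an element
`u : TG0` with `π₀(u) = e₀`; `T1(u) = TT.e u`; and `T𝓛_γ(v) = Tm(0_γ, v) = ζ₁(γ)·v`.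
-/

/-- A strict 2-group: a category internal to the category of groups.
`A0` is the group of objects, `A1` the group of arrows; source, target and unit are
group homomorphisms, and the (total extension of the) composition `comp σ γ`
(meaning `σ ∗ γ`, defined when `s σ = t γ`) satisfies the usual category axioms and
the interchange law (which expresses that `∗ : G₂ → G₁` is a group homomorphism). -/
structure TwoGp (A0 A1 : Type*) [Group A0] [Group A1] where
  s : A1 →* A0
  t : A1 →* A0
  e : A0 →* A1
  s_e : ∀ x, s (e x) = x
  t_e : ∀ x, t (e x) = x
  comp : A1 → A1 → A1
  s_comp : ∀ {σ γ}, s σ = t γ → s (comp σ γ) = s γ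
  t_comp : ∀ {σ γ}, s σ = t γ → t (comp σ γ) = t σ
  comp_e_left : ∀ γ, comp (e (t γ)) γ = γ
  comp_e_right : ∀ σ, comp σ (e (s σ)) = σ
  assoc : ∀ {σ₃ σ₂ σ₁}, s σ₃ = t σ₂ → s σ₂ = t σ₁ →
    comp (comp σ₃ σ₂) σ₁ = comp σ₃ (comp σ₂ σ₁)
  interchange : ∀ {σ₂ σ₁ γ₂ γ₁ : A1}, s σ₂ = t σ₁ → s γ₂ = t γ₁ →
    comp σ₂ σ₁ * comp γ₂ γ₁ = comp (σ₂ * γ₂) (σ₁ * γ₁)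
/-- A homomorphism of strict 2-groups: a functor internal to the category of groups. -/
structure TwoGpHom {A0 A1 B0 B1 : Type*} [Group A0] [Group A1] [Group B0] [Group B1]
    (T : TwoGp A0 A1) (U : TwoGp B0 B1) where
  f0 : A0 →* B0
  f1 : A1 →* B1
  map_s : ∀ γ, U.s (f1 γ) = f0 (T.s γ)
  map_t : ∀ γ, U.t (f1 γ) = f0 (T.t γ)
  map_e : ∀ x, f1 (T.e x) = U.e (f0 x)
  map_comp : ∀ {σ γ}, T.s σ = T.t γ → f1 (T.comp σ γ) = U.comp (f1 σ) (f1 γ)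

/-- An (algebraic model of the) tangent 2-group `TG` of a Lie 2-group `G = T`:
`TT` models the tangent groupoid `TG` (which is again a 2-group, with multiplication
`Tm`, unit `T1` and composition `⋆ = T∗`), `ζ` models the zero section `G → TG`
(a homomorphism of 2-groups), and `π` models the projection `TG → G` (a homomorphism
of 2-groups with `π ∘ ζ = id`).  In this model, for `γ ∈ G₁` and `v ∈ TG₁`, the
derivative of left translation acts by `T𝓛_γ(v) = Tm(0_γ, v) = ζ₁(γ) * v`, and
similarly on `TG₀`; the unit map `T1 : TG₀ → TG₁` is `TT.e`. -/
structure TangentModel {G0 G1 TG0 TG1 : Type*}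
    [Group G0] [Group G1] [Group TG0] [Group TG1]
    (T : TwoGp G0 G1) (TT : TwoGp TG0 TG1) where
  ζ : TwoGpHom T TT
  π : TwoGpHom TT T
  π_ζ0 : ∀ x, π.f0 (ζ.f0 x) = x
  π_ζ1 : ∀ γ, π.f1 (ζ.f1 γ) = γ

theorem q_preserves_composition {G0 G1 TG0 TG1 : Type*}
    [Group G0] [Group G1] [Group TG0] [Group TG1]
    (T : TwoGp G0 G1) (TT : TwoGp TG0 TG1) (M : TangentModel T TT)
    (u : TG0) (hu : M.π.f0 u = 1)
    (γ₂ γ₁ : G1) (h : T.s γ₂ = T.t γ₁) :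
    -- `q(u)₁(γ) := T𝓛_γ(T1 u) = ζ₁(γ) · T1(u)`
    M.ζ.f1 (T.comp γ₂ γ₁) * TT.e u =
      TT.comp (M.ζ.f1 γ₂ * TT.e u) (M.ζ.f1 γ₁ * TT.e u) := by
  have h1 : TT.s (M.ζ.f1 γ₂) = TT.t (M.ζ.f1 γ₁) := by
    rw [M.ζ.map_s, M.ζ.map_t, h]
  have h2 : TT.s (TT.e u) = TT.t (TT.e u) := by rw [TT.s_e, TT.t_e]
  have h3 : TT.comp (TT.e u) (TT.e u) = TT.e u := by
    have := TT.comp_e_left (TT.e u)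
    rwa [TT.t_e] at this
  rw [M.ζ.map_comp h, ← h3, TT.interchange h1 h2, h3]
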